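/- arXiv:1405.7821 — 6 statements merged into one kernel-verified Lean document; each statement's English description precedes it below -/
import Mathlib

section
/- Let Q and A be real 2×2 matrices and let σ be a real 2×2 matrix, with Q invertible. If Q satisfies the Riccati equation 2·Q·σ·Q + Q·A + Aᵀ·Q = 0, then trace(A + σ·Q) = 0. -/
/-- If an invertible 2×2 real matrix `Q` satisfies the Riccati equation
`2·Q·σ·Q + Q·A + Aᵀ·Q = 0`, then `trace (A + σ·Q) = 0`. -/
theorem riccati_trace_eq_zero (Q A σ : Matrix (Fin 2) (Fin 2) ℝ)
    (hQ : IsUnit Q)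
    (hric : (2 : ℝ) • (Q * σ * Q) + Q * A + A.transpose * Q = 0) :
    (A + σ * Q).trace = 0 := by
  have hdet : IsUnit Q.det := (Matrix.isUnit_iff_isUnit_det Q).mp hQ
  have hinv : Q⁻¹ * Q = 1 := Matrix.nonsing_inv_mul Q hdet
  have h := congrArg (fun M => (Q⁻¹ * M).trace) hric
  simp only [Matrix.mul_add, Matrix.mul_smul, Matrix.mul_zero, Matrix.trace_add,
    Matrix.trace_smul, Matrix.trace_zero] at h
  have h1 : Q⁻¹ * (Q * σ * Q) = σ * Q := by
    rw [show Q * σ * Q = Q * (σ * Q) by rw [mul_assoc], ← mul_assoc, hinv, one_mul]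
  have h2 : Q⁻¹ * (Q * A) = A := by rw [← mul_assoc, hinv, one_mul]
  have h3 : (Q⁻¹ * (A.transpose * Q)).trace = A.trace := by
    rw [← mul_assoc, Matrix.trace_mul_cycle]
    rw [show Q * Q⁻¹ * A.transpose = Q * Q⁻¹ * A.transpose from rfl, Matrix.mul_nonsing_inv Q hdet, one_mul, Matrix.trace_transpose]
  rw [h1, h2, h3] at h
  have := h
  rw [Matrix.trace_add]
  simp only [smul_eq_mul] at h
  linarith
end

section
/- Let S > 0, let B : ℝ → ℝ be continuous and S-periodic with B(s) > 0 for all s, let M : ℝ → Matrix (Fin 2) (Fin 2) ℝ be such that M(s) is positive definite for every s, let v : ℝ → (Fin 2 → ℝ) be continuous, and let f : ℝ → ℝ be continuously differentiable and S-periodic. If for all s one has (v s) ⬝ (M s).mulVec (v s) + B(s) · f'(s) = 0, then f is constant, f'(s) = 0 for all s, and v(s) = 0 for all s. -/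
/-- If `v(s)ᵀ M(s) v(s) + B(s) f'(s) = 0` with `B > 0`, `M(s)` positive
definite and `f` an `S`-periodic `C¹` function, then `f` is constant, `f' ≡ 0` and `v ≡ 0`. -/
theorem eikonal_constant_on_limit_cycle
    (S : ℝ) (hS : 0 < S)
    (B : ℝ → ℝ) (hBcont : Continuous B) (hBper : Function.Periodic B S)
    (hBpos : ∀ s, 0 < B s)
    (M : ℝ → Matrix (Fin 2) (Fin 2) ℝ) (hM : ∀ s, (M s).PosDef)
    (v : ℝ → Fin 2 → ℝ) (hv : Continuous v)
    (f : ℝ → ℝ) (hf : ContDiff ℝ 1 f) (hfper : Function.Periodic f S)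
    (heq : ∀ s, dotProduct (v s) ((M s).mulVec (v s)) + B s * deriv f s = 0) :
    (∀ s t, f s = f t) ∧ (∀ s, deriv f s = 0) ∧ (∀ s, v s = 0) := by
  have hdot : ∀ s, 0 ≤ dotProduct (v s) ((M s).mulVec (v s)) := by
    intro s
    have := (hM s).posSemidef.dotProduct_mulVec_nonneg (v s)
    simpa using this
  have hderiv_le : ∀ s, deriv f s ≤ 0 := by
    intro s
    have h := heq s
    nlinarith [hdot s, hBpos s]
  have hdiff : Differentiable ℝ f := hf.differentiable one_ne_zero
  have hanti : Antitone f := antitone_of_deriv_nonpos hdiff hderiv_le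
  have hconst : ∀ s t, f s = f t := by
    intro s t
    rcases le_total s t with h | h
    · -- f t ≤ f s; and find n with t ≤ s + n*S, so f s = f (s + n*S) ≤ f t
      refine le_antisymm ?_ (hanti h)
      obtain ⟨n, hn⟩ := Archimedean.arch (t - s) hS
      have hper' : f (s + (n : ℝ) * S) = f s := by
        have := (hfper.nat_mul n) s
        simpa [add_comm] using this
      have hle : t ≤ s + (n : ℝ) * S := by
        have : (t - s) ≤ (n : ℝ) * S := by simpa [nsmul_eq_mul] using hn
        linarith
      calc f s = f (s + (n : ℝ) * S) := hper'.symm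
        _ ≤ f t := hanti hle
    · exact (hanti h).antisymm <| by
        obtain ⟨n, hn⟩ := Archimedean.arch (s - t) hS
        have hper' : f (t + (n : ℝ) * S) = f t := by
          have := (hfper.nat_mul n) t
          simpa [add_comm] using this
        have hle : s ≤ t + (n : ℝ) * S := by
          have : (s - t) ≤ (n : ℝ) * S := by simpa [nsmul_eq_mul] using hn
          linarith
        calc f t = f (t + (n : ℝ) * S) := hper'.symm
          _ ≤ f s := hanti hle
  have hfconst : f = fun _ => f 0 := funext fun x => hconst x 0
  have hder0 : ∀ s, deriv f s = 0 := by
    intro s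
    rw [hfconst]
    simp
  refine ⟨hconst, hder0, fun s => ?_⟩
  have h := heq s
  rw [hder0 s] at h
  have hdz : dotProduct (v s) ((M s).mulVec (v s)) = 0 := by linarith
  by_contra hne
  have := (hM s).dotProduct_mulVec_pos hne
  simp only [star_trivial] at this
  rw [hdz] at this
  exact lt_irrefl _ this
end

section
/- Let S > 0 and let σ, a⁰, φ, B, ξ : ℝ → ℝ with B(s) > 0, ξ continuously differentiable, φ(s) = −ξ(s)² for all s, and suppose ξ satisfies the Bernoulli-type equation σ(s)·ξ(s)³ + [a⁰(s) + 2σ(s)φ(s)]·ξ(s) + B(s)·ξ'(s) = 0 for all s. Define F : ℝ → ℝ by F(x) = −√(2/π) · ∫₀^x exp(−z²/2) dz and Q(ζ, s) = F(ξ(s)·ζ). Then Q satisfies the boundary layer PDE σ(s)·∂²Q/∂ζ²(ζ,s) − ζ·[a⁰(s) + 2σ(s)φ(s)]·∂Q/∂ζ(ζ,s) − B(s)·∂Q/∂s(ζ,s) = 0 for all ζ ≤ 0 and all s, together with Q(0, s) = 0 and Q(ζ, s) → 1 as ζ → −∞ (for each fixed s with ξ(s) > 0). -/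
open Filter

lemma g_rewrite : (fun z : ℝ => Real.exp (-z ^ 2 / 2)) = fun z : ℝ => Real.exp (-(1/2) * z ^ 2) := by
  funext z; ring_nf

lemma g_cont : Continuous fun z : ℝ => Real.exp (-z ^ 2 / 2) := by
  continuity

lemma g_hasDerivAt (u : ℝ) :
    HasDerivAt (fun z : ℝ => Real.exp (-z ^ 2 / 2)) (-u * Real.exp (-u ^ 2 / 2)) u := by
  have h : HasDerivAt (fun z : ℝ => -z ^ 2 / 2) (-(2 * u ^ 1) / 2) u :=
    ((hasDerivAt_pow 2 u).neg).div_const 2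
  have := h.exp
  convert this using 1
  ring

lemma g_int_Iic : ∫ z in Set.Iic (0:ℝ), Real.exp (-z ^ 2 / 2) = Real.sqrt (Real.pi / (1/2)) / 2 := by
  have h1 : ∫ z in Set.Ioi (0:ℝ), Real.exp (-z ^ 2 / 2) = Real.sqrt (Real.pi / (1/2)) / 2 := by
    rw [g_rewrite]
    exact integral_gaussian_Ioi (1/2)
  have h2 : ∫ z in Set.Iic (0:ℝ), Real.exp (-z ^ 2 / 2)
      = ∫ z in Set.Ioi (0:ℝ), Real.exp (-z ^ 2 / 2) := by
    have := integral_comp_neg_Iic (0:ℝ) (fun z => Real.exp (-z ^ 2 / 2))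
    simp only [neg_zero] at this
    rw [← this]
    congr 1
    funext z
    rw [neg_pow, ]
    ring_nf
  rw [h2, h1]

/-- `Q(ζ,s) = F(ξ(s)ζ)` with `F(x) = −√(2/π)·∫₀^x exp(−z²/2) dz` and `ξ`
the solution of the Bernoulli-type equation `σξ³ + (a⁰ + 2σφ)ξ + Bξ' = 0` (with `φ = −ξ²`)
satisfies the boundary layer PDE `σ Q_ζζ − ζ(a⁰ + 2σφ) Q_ζ − B Q_s = 0` for `ζ ≤ 0`,
with `Q(0,s) = 0` and `Q(ζ,s) → 1` as `ζ → −∞` whenever `ξ(s) > 0`. -/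
theorem boundary_layer_solution_forward
    (S : ℝ) (hS : 0 < S)
    (σ a0 φ B ξ : ℝ → ℝ)
    (hB : ∀ s, 0 < B s)
    (hξ : ContDiff ℝ 1 ξ)
    (hφ : ∀ s, φ s = -ξ s ^ 2)
    (hbern : ∀ s, σ s * ξ s ^ 3 + (a0 s + 2 * σ s * φ s) * ξ s + B s * deriv ξ s = 0)
    (F : ℝ → ℝ)
    (hF : ∀ x, F x = -Real.sqrt (2 / Real.pi) * ∫ z in (0:ℝ)..x, Real.exp (-z ^ 2 / 2))
    (Q : ℝ → ℝ → ℝ)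
    (hQdef : ∀ ζ s, Q ζ s = F (ξ s * ζ)) :
    (∀ ζ ≤ (0:ℝ), ∀ s,
        σ s * deriv (deriv (fun ζ' => Q ζ' s)) ζ
          - ζ * (a0 s + 2 * σ s * φ s) * deriv (fun ζ' => Q ζ' s) ζ
          - B s * deriv (fun s' => Q ζ s') s = 0) ∧
    (∀ s, Q 0 s = 0) ∧
    (∀ s, 0 < ξ s → Tendsto (fun ζ => Q ζ s) atBot (nhds 1)) := by
  set c : ℝ := Real.sqrt (2 / Real.pi) with hc
  set g : ℝ → ℝ := fun z => Real.exp (-z ^ 2 / 2) with hg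
  -- F has derivative -c * g x at every x
  have hFd : ∀ x, HasDerivAt F (-c * g x) x := by
    intro x
    have h1 : HasDerivAt (fun u => ∫ z in (0:ℝ)..u, g z) (g x) x :=
      intervalIntegral.integral_hasDerivAt_right ((g_cont).intervalIntegrable 0 x)
        (g_cont.stronglyMeasurableAtFilter _ _) g_cont.continuousAt
    have h2 := h1.const_mul (-c)
    have hFeq : F = fun x => -c * ∫ z in (0:ℝ)..x, g z := funext hF
    rw [hFeq]
    simpa [mul_comm] using h2
  have hξd : Differentiable ℝ ξ := hξ.differentiable one_ne_zero
  -- derivative in ζ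
  have hQζ : ∀ s ζ, HasDerivAt (fun ζ' => Q ζ' s) (-c * g (ξ s * ζ) * ξ s) ζ := by
    intro s ζ
    have hin : HasDerivAt (fun ζ' : ℝ => ξ s * ζ') (ξ s) ζ := by
      simpa using (hasDerivAt_id ζ).const_mul (ξ s)
    have := (hFd (ξ s * ζ)).comp ζ hin
    have heq : (fun ζ' => Q ζ' s) = (F ∘ fun ζ' => ξ s * ζ') := by
      funext ζ'; simp [hQdef]
    rw [heq]
    exact this
  have hQζfun : ∀ s, deriv (fun ζ' => Q ζ' s) = fun ζ => -c * g (ξ s * ζ) * ξ s := by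
    intro s; funext ζ; exact (hQζ s ζ).deriv
  -- second derivative in ζ
  have hQζζ : ∀ s ζ, deriv (deriv (fun ζ' => Q ζ' s)) ζ
      = -c * (-(ξ s * ζ) * g (ξ s * ζ) * ξ s) * ξ s := by
    intro s ζ
    rw [hQζfun s]
    have hin : HasDerivAt (fun ζ' : ℝ => ξ s * ζ') (ξ s) ζ := by
      simpa using (hasDerivAt_id ζ).const_mul (ξ s)
    have hgc : HasDerivAt (fun ζ' => g (ξ s * ζ')) (-(ξ s * ζ) * g (ξ s * ζ) * ξ s) ζ := by
      have := (g_hasDerivAt (ξ s * ζ)).comp ζ hin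
      exact this
    have := (hgc.const_mul (-c)).mul_const (ξ s)
    have heq : (fun ζ => -c * g (ξ s * ζ) * ξ s) = fun ζ' => -c * g (ξ s * ζ') * ξ s := rfl
    rw [heq]
    exact this.deriv
  -- derivative in s
  have hQs : ∀ s ζ, deriv (fun s' => Q ζ s') s = -c * g (ξ s * ζ) * (deriv ξ s * ζ) := by
    intro s ζ
    have hin : HasDerivAt (fun s' => ξ s' * ζ) (deriv ξ s * ζ) s :=
      (hξd s).hasDerivAt.mul_const ζ
    have := (hFd (ξ s * ζ)).comp s hin
    have heq : (fun s' => Q ζ s') = (F ∘ fun s' => ξ s' * ζ) := by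
      funext s'; simp [hQdef]
    rw [heq]
    exact this.deriv
  refine ⟨?_, ?_, ?_⟩
  · intro ζ hζ s
    rw [hQζζ s ζ, hQζfun s, hQs s ζ]
    have hb := hbern s
    simp only []
    linear_combination (c * g (ξ s * ζ) * ζ) * hb
  · intro s
    rw [hQdef, mul_zero, hF]
    simp
  · intro s hξs
    have h1 : Tendsto (fun ζ : ℝ => ξ s * ζ) atBot atBot := by
      exact Tendsto.const_mul_atBot hξs tendsto_id
    have hint : MeasureTheory.IntegrableOn g (Set.Iic (0:ℝ)) := by
      rw [hg, g_rewrite]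
      exact (integrable_exp_neg_mul_sq (by norm_num : (0:ℝ) < 1/2)).integrableOn
    have h2 : Tendsto (fun x : ℝ => ∫ z in x..(0:ℝ), g z) atBot
        (nhds (∫ z in Set.Iic (0:ℝ), g z)) :=
      MeasureTheory.intervalIntegral_tendsto_integral_Iic 0 hint tendsto_id
    have h3 : Tendsto F atBot (nhds (c * ∫ z in Set.Iic (0:ℝ), g z)) := by
      have := h2.const_mul c
      have hFeq : F = fun x => c * ∫ z in x..(0:ℝ), g z := by
        funext x
        rw [hF, intervalIntegral.integral_symm]
        ring
      rw [hFeq]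
      exact this
    have hval : c * ∫ z in Set.Iic (0:ℝ), g z = 1 := by
      rw [hg]
      rw [g_int_Iic]
      rw [hc, show Real.pi / (1/2) = 2 * Real.pi by ring]
      have h4 : Real.sqrt (2 / Real.pi) * Real.sqrt (2 * Real.pi) = 2 := by
        rw [← Real.sqrt_mul (by positivity),
          show 2 / Real.pi * (2 * Real.pi) = 4 by field_simp; ring,
          show (4:ℝ) = 2 ^ 2 by norm_num, Real.sqrt_sq (by norm_num)]
      calc Real.sqrt (2 / Real.pi) * (Real.sqrt (2 * Real.pi) / 2)
          = Real.sqrt (2 / Real.pi) * Real.sqrt (2 * Real.pi) / 2 := by ring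
        _ = 1 := by rw [h4]; norm_num
    rw [← hval]
    have heq : (fun ζ => Q ζ s) = F ∘ fun ζ => ξ s * ζ := by
      funext ζ; simp [hQdef]
    rw [heq]
    exact h3.comp h1
end

section
/- Let σ, a⁰, B, ξ₀ : ℝ → ℝ with B(s) > 0 and ξ₀ continuously differentiable, and suppose ξ₀ satisfies the Bernoulli equation B(s)·ξ₀'(s) + a⁰(s)·ξ₀(s) − σ(s)·ξ₀(s)³ = 0 for all s. Define F(x) = −√(2/π) · ∫₀^x exp(−z²/2) dz and Q(ζ, s) = F(ξ₀(s)·ζ). Then Q satisfies the adjoint boundary layer PDE σ(s)·∂²Q/∂ζ²(ζ,s) + ζ·a⁰(s)·∂Q/∂ζ(ζ,s) + B(s)·∂Q/∂s(ζ,s) = 0 for all ζ and s, together with Q(0,s) = 0. -/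
/-- `Q(ζ,s) = F(ξ₀(s)ζ)` with `F(x) = −√(2/π)·∫₀^x exp(−z²/2) dz` and `ξ₀`
the solution of the Bernoulli equation `Bξ₀' + a⁰ξ₀ − σξ₀³ = 0` satisfies the adjoint
boundary layer PDE `σ Q_ζζ + ζ a⁰ Q_ζ + B Q_s = 0`, with `Q(0,s) = 0`. -/
theorem boundary_layer_solution_adjoint
    (σ a0 B ξ0 : ℝ → ℝ)
    (hB : ∀ s, 0 < B s)
    (hξ0 : ContDiff ℝ 1 ξ0)
    (hbern : ∀ s, B s * deriv ξ0 s + a0 s * ξ0 s - σ s * ξ0 s ^ 3 = 0)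
    (F : ℝ → ℝ)
    (hF : ∀ x, F x = -Real.sqrt (2 / Real.pi) * ∫ z in (0:ℝ)..x, Real.exp (-z ^ 2 / 2))
    (Q : ℝ → ℝ → ℝ)
    (hQdef : ∀ ζ s, Q ζ s = F (ξ0 s * ζ)) :
    (∀ ζ s,
        σ s * deriv (deriv (fun ζ' => Q ζ' s)) ζ
          + ζ * a0 s * deriv (fun ζ' => Q ζ' s) ζ
          + B s * deriv (fun s' => Q ζ s') s = 0) ∧
    (∀ s, Q 0 s = 0) := by
  set c : ℝ := -Real.sqrt (2 / Real.pi) with hc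
  have hg : Continuous fun z : ℝ => Real.exp (-z ^ 2 / 2) := by
    continuity
  have hF' : ∀ x : ℝ, HasDerivAt F (c * Real.exp (-x ^ 2 / 2)) x := by
    intro x
    have hFe : F = fun x => c * ∫ z in (0:ℝ)..x, Real.exp (-z ^ 2 / 2) := funext hF
    rw [hFe]
    exact ((hg.integral_hasStrictDerivAt 0 x).hasDerivAt).const_mul c
  have hξd : ∀ s, HasDerivAt ξ0 (deriv ξ0 s) s := fun s =>
    ((hξ0.differentiable one_ne_zero) s).hasDerivAt
  -- first ζ-derivative
  have hQζ : ∀ ζ s, HasDerivAt (fun ζ' => Q ζ' s)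
      (ξ0 s * (c * Real.exp (-(ξ0 s * ζ) ^ 2 / 2))) ζ := by
    intro ζ s
    have h1 : HasDerivAt (fun ζ' => ξ0 s * ζ') (ξ0 s) ζ := by
      simpa using (hasDerivAt_id ζ).const_mul (ξ0 s)
    have h2 : HasDerivAt (fun ζ' => F (ξ0 s * ζ'))
        (c * Real.exp (-(ξ0 s * ζ) ^ 2 / 2) * ξ0 s) ζ := (hF' _).comp ζ h1
    have h3 : (fun ζ' => Q ζ' s) = fun ζ' => F (ξ0 s * ζ') :=
      funext fun ζ' => hQdef ζ' s
    rw [h3]; convert h2 using 1; ring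
  have hQζeq : (fun ζ s => deriv (fun ζ' => Q ζ' s) ζ)
      = fun ζ s => ξ0 s * (c * Real.exp (-(ξ0 s * ζ) ^ 2 / 2)) := by
    funext ζ s; exact (hQζ ζ s).deriv
  refine ⟨fun ζ s => ?_, fun s => by rw [hQdef 0 s, mul_zero, hF]; simp⟩
  -- second ζ-derivative
  have hexp : ∀ ζ' : ℝ, HasDerivAt (fun ζ'' => Real.exp (-(ξ0 s * ζ'') ^ 2 / 2))
      (Real.exp (-(ξ0 s * ζ') ^ 2 / 2) * (-(ξ0 s) ^ 2 * ζ')) ζ' := by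
    intro ζ'
    have h1 : HasDerivAt (fun ζ'' : ℝ => -(ξ0 s * ζ'') ^ 2 / 2)
        (-(ξ0 s) ^ 2 * ζ') ζ' := by
      have : HasDerivAt (fun ζ'' : ℝ => ξ0 s * ζ'') (ξ0 s) ζ' := by
        simpa using (hasDerivAt_id ζ').const_mul (ξ0 s)
      have : HasDerivAt (fun ζ'' : ℝ => -(ξ0 s * ζ'') ^ 2 / 2)
          (-((2:ℕ) * (ξ0 s * ζ') ^ (2 - 1) * ξ0 s) / 2) ζ' := ((this.pow 2).neg).div_const 2
      convert this using 1
      ring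
    simpa [mul_comm] using h1.exp
  have hQζζ : deriv (deriv (fun ζ' => Q ζ' s)) ζ
      = ξ0 s * (c * (Real.exp (-(ξ0 s * ζ) ^ 2 / 2) * (-(ξ0 s) ^ 2 * ζ))) := by
    have heq : deriv (fun ζ' => Q ζ' s)
        = fun ζ' => ξ0 s * (c * Real.exp (-(ξ0 s * ζ') ^ 2 / 2)) := by
      funext ζ'; exact (hQζ ζ' s).deriv
    rw [heq]
    exact (((hexp ζ).const_mul c).const_mul (ξ0 s)).deriv
  -- s-derivative
  have hQs : HasDerivAt (fun s' => Q ζ s')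
      (deriv ξ0 s * ζ * (c * Real.exp (-(ξ0 s * ζ) ^ 2 / 2))) s := by
    have h1 : HasDerivAt (fun s' => ξ0 s' * ζ) (deriv ξ0 s * ζ) s :=
      (hξd s).mul_const ζ
    have h2 : HasDerivAt (fun s' => F (ξ0 s' * ζ))
        (c * Real.exp (-(ξ0 s * ζ) ^ 2 / 2) * (deriv ξ0 s * ζ)) s := (hF' _).comp s h1
    have h3 : (fun s' => Q ζ s') = fun s' => F (ξ0 s' * ζ) :=
      funext fun s' => hQdef ζ s'
    rw [h3]; convert h2 using 1; ring
  rw [hQζζ, (hQζ ζ s).deriv, hQs.deriv]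
  have hb := hbern s
  linear_combination (ζ * c * Real.exp (-(ξ0 s * ζ) ^ 2 / 2)) * hb
end

section
/- Let S > 0, let σ, ξ, a⁰, B : ℝ → ℝ be continuous and S-periodic with B(s) > 0, σ(s) > 0, ξ continuously differentiable satisfying B·ξ' + a⁰·ξ − σ·ξ³ = 0, let n be a positive integer and m an integer, and set ω₂ = 2π/∫₀^S ds/B(s), λ_{m,n} = 2n·(ω₂/(2π))·∫₀^S σ(s)ξ(s)²/B(s) ds + i·m·ω₂. Define Q̃(η, s) = exp(−η²/2)·He_{2n−1}(η) · exp(−λ_{m,n}·∫₀ˢ ds'/B(s') + 2n·∫₀ˢ σ(s')ξ(s')²/B(s') ds'), where He_{2n−1} is the probabilists' Hermite polynomial of degree 2n−1. Then Q̃ satisfies the boundary layer eigenvalue equation σ(s)ξ(s)²·∂²Q̃/∂η² + σ(s)ξ(s)²·η·∂Q̃/∂η + B(s)·∂Q̃/∂s = −λ_{m,n}·Q̃ for all η ∈ ℝ and s ∈ ℝ, together with Q̃(0, s) = 0 for all s, Q̃(η, s) → 0 as η → −∞ for each s, and Q̃(η, s + S) = Q̃(η, s) for all η, s. -/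
open Filter Polynomial


private lemma derivative_hermite_succ (n : ℕ) :
    derivative (hermite (n + 1)) = (n + 1) • hermite n := by
  induction n with
  | zero => simp [hermite_one]
  | succ n ih =>
    rw [hermite_succ (n + 1), derivative_sub, derivative_mul, derivative_X, one_mul, ih,
      derivative_smul, mul_smul_comm, add_sub_assoc, ← smul_sub, ← hermite_succ, succ_nsmul]
    module

private lemma aeval_hermite_rec (k : ℕ) (η : ℝ) :
    aeval η (hermite (k + 2)) =
      η * aeval η (hermite (k + 1)) - (k + 1 : ℝ) * aeval η (hermite k) := by
  rw [show k + 2 = (k + 1) + 1 from rfl, hermite_succ, derivative_hermite_succ, map_sub, map_mul,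
    aeval_X, map_nsmul, nsmul_eq_mul]
  push_cast
  ring

private lemma hasDerivAt_gaussHermite (j : ℕ) (η : ℝ) :
    HasDerivAt (fun x : ℝ => Real.exp (-x ^ 2 / 2) * aeval x (hermite j))
      (-(Real.exp (-η ^ 2 / 2) * aeval η (hermite (j + 1)))) η := by
  have h1 : HasDerivAt (fun x : ℝ => -x ^ 2 / 2) (-η) η := by
    have := ((hasDerivAt_pow 2 η).neg.div_const 2)
    refine this.congr_deriv ?_
    norm_num
    ring
  have h2 := h1.exp
  have h3 := (hermite j).hasDerivAt_aeval η
  have h4 := h2.mul h3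
  refine h4.congr_deriv ?_
  rw [hermite_succ, map_sub, map_mul, aeval_X]
  ring

private lemma decay_atTop (q : ℝ[X]) :
    Tendsto (fun x : ℝ => q.eval x * Real.exp (-x ^ 2 / 2)) atTop (nhds 0) := by
  have h0 : Tendsto (fun x : ℝ => Real.exp (1 / 2) * |q.eval x / Real.exp x|) atTop (nhds 0) := by
    have h := (q.tendsto_div_exp_atTop).abs
    simpa using h.const_mul (Real.exp (1 / 2))
  refine squeeze_zero_norm (fun x => ?_) h0
  rw [Real.norm_eq_abs, abs_mul, Real.abs_exp, abs_div, Real.abs_exp]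
  calc |q.eval x| * Real.exp (-x ^ 2 / 2)
      ≤ |q.eval x| * (Real.exp (1 / 2) / Real.exp x) := by
        rw [← Real.exp_sub]
        exact mul_le_mul_of_nonneg_left (Real.exp_le_exp.mpr (by nlinarith [sq_nonneg (x - 1)])) (abs_nonneg _)
    _ = Real.exp (1 / 2) * (|q.eval x| / Real.exp x) := by ring

private lemma decay_atBot (q : ℝ[X]) :
    Tendsto (fun x : ℝ => q.eval x * Real.exp (-x ^ 2 / 2)) atBot (nhds 0) := by
  have h := (decay_atTop (q.comp (-X))).comp tendsto_neg_atBot_atTop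
  have he : (fun x : ℝ => q.eval x * Real.exp (-x ^ 2 / 2)) =
      (fun y : ℝ => (q.comp (-X)).eval y * Real.exp (-y ^ 2 / 2)) ∘ fun x : ℝ => -x := by
    funext x
    simp [Function.comp, eval_comp, neg_sq]
  rw [he]
  exact h

/-- The separated function
`Q̃(η,s) = exp(−η²/2) He_{2n−1}(η) · exp(−λ_{m,n}∫₀ˢ ds'/B + 2n∫₀ˢ σξ²/B)`
is a boundary-layer eigenfunction: it satisfies
`σξ²·Q̃_ηη + σξ²·η·Q̃_η + B·Q̃_s = −λ_{m,n}·Q̃`, vanishes at `η = 0`, decays as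
`η → −∞`, and is `S`-periodic in `s`. -/
theorem boundary_layer_eigenfunction
    (S : ℝ) (hS : 0 < S)
    (σ ξ a0 B : ℝ → ℝ)
    (hσcont : Continuous σ) (hξcont : Continuous ξ) (ha0cont : Continuous a0)
    (hBcont : Continuous B)
    (hσper : Function.Periodic σ S) (hξper : Function.Periodic ξ S)
    (ha0per : Function.Periodic a0 S) (hBper : Function.Periodic B S)
    (hB : ∀ s, 0 < B s) (hσ : ∀ s, 0 < σ s)
    (hξ : ContDiff ℝ 1 ξ)
    (hbern : ∀ s, B s * deriv ξ s + a0 s * ξ s - σ s * ξ s ^ 3 = 0)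
    (n : ℕ) (hn : 0 < n) (m : ℤ)
    (ω₂ : ℝ) (hω₂ : ω₂ = 2 * Real.pi / ∫ s in (0:ℝ)..S, 1 / B s)
    (lam : ℂ)
    (hlam : lam = ((2 * (n : ℝ) * (ω₂ / (2 * Real.pi)) *
        ∫ s in (0:ℝ)..S, σ s * ξ s ^ 2 / B s : ℝ) : ℂ) + Complex.I * (m : ℂ) * (ω₂ : ℂ))
    (Q : ℝ → ℝ → ℂ)
    (hQ : ∀ η s, Q η s =
        ((Real.exp (-η ^ 2 / 2) * Polynomial.aeval η (Polynomial.hermite (2 * n - 1)) : ℝ) : ℂ)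
          * Complex.exp (-lam * ((∫ t in (0:ℝ)..s, 1 / B t : ℝ) : ℂ)
              + 2 * (n : ℂ) * ((∫ t in (0:ℝ)..s, σ t * ξ t ^ 2 / B t : ℝ) : ℂ))) :
    (∀ η s, ((σ s * ξ s ^ 2 : ℝ) : ℂ) * deriv (deriv (fun η' => Q η' s)) η
        + ((σ s * ξ s ^ 2 : ℝ) : ℂ) * (η : ℂ) * deriv (fun η' => Q η' s) η
        + ((B s : ℝ) : ℂ) * deriv (fun s' => Q η s') s = -lam * Q η s) ∧
    (∀ s, Q 0 s = 0) ∧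
    (∀ s, Tendsto (fun η => Q η s) atBot (nhds 0)) ∧
    (∀ η s, Q η (s + S) = Q η s) := by
  have hBne : ∀ s, B s ≠ 0 := fun s => (hB s).ne'
  have hBinvcont : Continuous fun t => 1 / B t := continuous_const.div hBcont hBne
  have hGc : Continuous fun t => σ t * ξ t ^ 2 / B t :=
    (hσcont.mul (hξcont.pow 2)).div hBcont hBne
  have hF : ∀ s, HasDerivAt (fun u => ∫ t in (0:ℝ)..u, 1 / B t) (1 / B s) s := fun s =>
    intervalIntegral.integral_hasDerivAt_right (hBinvcont.intervalIntegrable _ _)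
      (hBinvcont.stronglyMeasurableAtFilter _ _) hBinvcont.continuousAt
  have hG : ∀ s, HasDerivAt (fun u => ∫ t in (0:ℝ)..u, σ t * ξ t ^ 2 / B t)
      (σ s * ξ s ^ 2 / B s) s := fun s =>
    intervalIntegral.integral_hasDerivAt_right (hGc.intervalIntegrable _ _)
      (hGc.stronglyMeasurableAtFilter _ _) hGc.continuousAt
  refine ⟨?_, ?_, ?_, ?_⟩
  · -- PDE
    intro η s
    set E : ℂ := Complex.exp (-lam * ((∫ t in (0:ℝ)..s, 1 / B t : ℝ) : ℂ)
        + 2 * (n : ℂ) * ((∫ t in (0:ℝ)..s, σ t * ξ t ^ 2 / B t : ℝ) : ℂ)) with hE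
    have e1 : (fun η' => Q η' s) =
        fun η' => ((Real.exp (-η' ^ 2 / 2) * Polynomial.aeval η'
          (Polynomial.hermite (2 * n - 1)) : ℝ) : ℂ) * E := funext fun η' => hQ η' s
    have hd1 : ∀ x : ℝ, HasDerivAt (fun η' => Q η' s)
        (((-(Real.exp (-x ^ 2 / 2) * Polynomial.aeval x
          (Polynomial.hermite (2 * n - 1 + 1))) : ℝ) : ℂ) * E) x := by
      intro x
      rw [e1]
      exact ((hasDerivAt_gaussHermite (2 * n - 1) x).ofReal_comp).mul_const E
    have hderiv1 : deriv (fun η' => Q η' s) =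
        fun x : ℝ => ((-(Real.exp (-x ^ 2 / 2) * Polynomial.aeval x
          (Polynomial.hermite (2 * n - 1 + 1))) : ℝ) : ℂ) * E := funext fun x => (hd1 x).deriv
    have hd2 : HasDerivAt (fun x : ℝ => ((-(Real.exp (-x ^ 2 / 2) * Polynomial.aeval x
          (Polynomial.hermite (2 * n - 1 + 1))) : ℝ) : ℂ) * E)
        (((Real.exp (-η ^ 2 / 2) * Polynomial.aeval η
          (Polynomial.hermite (2 * n - 1 + 1 + 1)) : ℝ) : ℂ) * E) η := by
      have h := (((hasDerivAt_gaussHermite (2 * n - 1 + 1) η).neg).ofReal_comp).mul_const E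
      simpa using h
    have e2 : (fun s' => Q η s') =
        fun s' => ((Real.exp (-η ^ 2 / 2) * Polynomial.aeval η
          (Polynomial.hermite (2 * n - 1)) : ℝ) : ℂ) *
          Complex.exp (-lam * ((∫ t in (0:ℝ)..s', 1 / B t : ℝ) : ℂ)
            + 2 * (n : ℂ) * ((∫ t in (0:ℝ)..s', σ t * ξ t ^ 2 / B t : ℝ) : ℂ)) :=
      funext fun s' => hQ η s'
    have hd3 : HasDerivAt (fun s' => Q η s')
        (((Real.exp (-η ^ 2 / 2) * Polynomial.aeval η
          (Polynomial.hermite (2 * n - 1)) : ℝ) : ℂ) *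
          (E * (-lam * ((1 / B s : ℝ) : ℂ)
            + 2 * (n : ℂ) * ((σ s * ξ s ^ 2 / B s : ℝ) : ℂ)))) s := by
      rw [e2]
      exact ((((hF s).ofReal_comp.const_mul (-lam)).add
        ((hG s).ofReal_comp.const_mul (2 * (n : ℂ)))).cexp.const_mul _)
    rw [hQ η s, hd3.deriv, (hd1 η).deriv, hderiv1, hd2.deriv]
    have hkk : ((2 * n - 1 : ℕ) : ℝ) + 1 = 2 * (n : ℝ) := by
      have h : (2 * n - 1 : ℕ) + 1 = 2 * n := by omega
      exact_mod_cast congrArg (fun j : ℕ => (j : ℝ)) h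
    have hrec : Polynomial.aeval η (Polynomial.hermite (2 * n - 1 + 1 + 1)) =
        η * Polynomial.aeval η (Polynomial.hermite (2 * n - 1 + 1))
          - 2 * (n : ℝ) * Polynomial.aeval η (Polynomial.hermite (2 * n - 1)) := by
      have h := aeval_hermite_rec (2 * n - 1) η
      rw [hkk] at h
      exact h
    have hrecC := congrArg (Complex.ofReal) hrec
    push_cast only [Complex.ofReal_mul, Complex.ofReal_sub, Complex.ofReal_ofNat,
      Complex.ofReal_natCast] at hrecC
    have hBC : ((B s : ℝ) : ℂ) ≠ 0 := by exact_mod_cast hBne s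
    have hBd : ((B s : ℝ) : ℂ) * (-lam * ((1 / B s : ℝ) : ℂ)
          + 2 * (n : ℂ) * ((σ s * ξ s ^ 2 / B s : ℝ) : ℂ))
        = -lam + 2 * (n : ℂ) * (((σ s : ℝ) : ℂ) * ((ξ s : ℝ) : ℂ) ^ 2) := by
      push_cast
      field_simp
    simp only [Complex.ofReal_mul, Complex.ofReal_neg, Complex.ofReal_pow]
    linear_combination (((σ s : ℝ) : ℂ) * ((ξ s : ℝ) : ℂ) ^ 2 *
        ((Real.exp (-η ^ 2 / 2) : ℝ) : ℂ) * E) * hrecC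
      + (((Real.exp (-η ^ 2 / 2) : ℝ) : ℂ) *
        ((Polynomial.aeval η (Polynomial.hermite (2 * n - 1)) : ℝ) : ℂ) * E) * hBd
  · -- boundary value at η = 0
    intro s
    rw [hQ 0 s]
    have h0 : Polynomial.aeval (0 : ℝ) (Polynomial.hermite (2 * n - 1)) = 0 := by
      rw [Polynomial.aeval_def, Polynomial.eval₂_at_zero,
        Polynomial.coeff_hermite_of_odd_add (⟨n - 1, by omega⟩ : Odd (2 * n - 1 + 0))]
      simp
    simp [h0]
  · -- decay at -∞
    intro s
    have hreal : Tendsto (fun x : ℝ => Real.exp (-x ^ 2 / 2) *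
        Polynomial.aeval x (Polynomial.hermite (2 * n - 1))) atBot (nhds 0) := by
      have he : (fun x : ℝ => Real.exp (-x ^ 2 / 2) *
          Polynomial.aeval x (Polynomial.hermite (2 * n - 1))) =
          fun x : ℝ => (((Polynomial.hermite (2 * n - 1)).map
            (algebraMap ℤ ℝ)).eval x) * Real.exp (-x ^ 2 / 2) := by
        funext x
        rw [Polynomial.eval_map, ← Polynomial.aeval_def]
        ring
      rw [he]
      exact decay_atBot _
    have he2 : (fun η => Q η s) = fun η : ℝ => ((Real.exp (-η ^ 2 / 2) *
        Polynomial.aeval η (Polynomial.hermite (2 * n - 1)) : ℝ) : ℂ) *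
        Complex.exp (-lam * ((∫ t in (0:ℝ)..s, 1 / B t : ℝ) : ℂ)
          + 2 * (n : ℂ) * ((∫ t in (0:ℝ)..s, σ t * ξ t ^ 2 / B t : ℝ) : ℂ)) :=
      funext fun η => hQ η s
    rw [he2]
    have hc := (Complex.continuous_ofReal.tendsto 0).comp hreal
    simpa using hc.mul_const (Complex.exp (-lam * ((∫ t in (0:ℝ)..s, 1 / B t : ℝ) : ℂ)
      + 2 * (n : ℂ) * ((∫ t in (0:ℝ)..s, σ t * ξ t ^ 2 / B t : ℝ) : ℂ)))
  · -- periodicity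
    intro η s
    rw [hQ η (s + S), hQ η s]
    have hpB : Function.Periodic (fun t => 1 / B t) S := fun t => by simp [hBper t]
    have hpG : Function.Periodic (fun t => σ t * ξ t ^ 2 / B t) S := fun t => by
      simp [hσper t, hξper t, hBper t]
    have hFper : (∫ t in (0:ℝ)..(s + S), 1 / B t) =
        (∫ t in (0:ℝ)..s, 1 / B t) + ∫ t in (0:ℝ)..S, 1 / B t := by
      simpa using hpB.intervalIntegral_add_eq_add 0 s
        (fun t₁ t₂ => hBinvcont.intervalIntegrable _ _)
    have hGper : (∫ t in (0:ℝ)..(s + S), σ t * ξ t ^ 2 / B t) =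
        (∫ t in (0:ℝ)..s, σ t * ξ t ^ 2 / B t) + ∫ t in (0:ℝ)..S, σ t * ξ t ^ 2 / B t := by
      simpa using hpG.intervalIntegral_add_eq_add 0 s
        (fun t₁ t₂ => hGc.intervalIntegrable _ _)
    rw [hFper, hGper]
    congr 1
    set I1 : ℝ := ∫ t in (0:ℝ)..S, 1 / B t with hI1
    set I2 : ℝ := ∫ t in (0:ℝ)..S, σ t * ξ t ^ 2 / B t with hI2
    have hI1pos : 0 < I1 :=
      intervalIntegral.intervalIntegral_pos_of_pos (hBinvcont.intervalIntegrable 0 S)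
        (fun x => div_pos one_pos (hB x)) hS
    have hω : ω₂ * I1 = 2 * Real.pi := by
      rw [hω₂]
      field_simp
    have hr : (2 * (n : ℝ) * (ω₂ / (2 * Real.pi)) * I2) * I1 = 2 * (n : ℝ) * I2 := by
      rw [hω₂]
      have := Real.pi_ne_zero
      field_simp
    have hone : Complex.exp (-lam * (I1 : ℂ) + 2 * (n : ℂ) * (I2 : ℂ)) = 1 := by
      have harg : -lam * (I1 : ℂ) + 2 * (n : ℂ) * (I2 : ℂ) =
          ((-m : ℤ) : ℂ) * (2 * Real.pi * Complex.I) := by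
        have hω' := congrArg (Complex.ofReal) hω
        have hr' := congrArg (Complex.ofReal) hr
        push_cast at hω' hr'
        rw [hlam]
        push_cast
        linear_combination (-1 : ℂ) * hr' - Complex.I * (m : ℂ) * hω'
      rw [harg, Complex.exp_int_mul_two_pi_mul_I]
    rw [show -lam * ((((∫ t in (0:ℝ)..s, 1 / B t) + I1 : ℝ)) : ℂ)
          + 2 * (n : ℂ) * ((((∫ t in (0:ℝ)..s, σ t * ξ t ^ 2 / B t) + I2 : ℝ)) : ℂ)
        = (-lam * ((∫ t in (0:ℝ)..s, 1 / B t : ℝ) : ℂ)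
          + 2 * (n : ℂ) * ((∫ t in (0:ℝ)..s, σ t * ξ t ^ 2 / B t : ℝ) : ℂ))
          + (-lam * (I1 : ℂ) + 2 * (n : ℂ) * (I2 : ℂ)) by push_cast; ring,
      Complex.exp_add, hone, mul_one]
end

section
/- Let S > 0 and let B, σ, a⁰ : ℝ → ℝ be continuous and S-periodic with B(s) > 0, σ(s) > 0 and a⁰(s) ≥ 0 for all s, and suppose ∫₀^S a⁰(s)/B(s) ds > 0. Then there exists a continuously differentiable, S-periodic function ξ : ℝ → ℝ with ξ(s) > 0 for all s satisfying the Bernoulli equation B(s)·ξ'(s) + a⁰(s)·ξ(s) − σ(s)·ξ(s)³ = 0 for all s. -/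
/-- Existence of the positive `S`-periodic solution of the Bernoulli
equation `Bξ' + a⁰ξ − σξ³ = 0`, given `B > 0`, `σ > 0`, `a⁰ ≥ 0` continuous and
`S`-periodic with `∫₀^S a⁰/B > 0`. -/
theorem exists_periodic_bernoulli_solution
    (S : ℝ) (hS : 0 < S)
    (B σ a0 : ℝ → ℝ)
    (hBcont : Continuous B) (hσcont : Continuous σ) (ha0cont : Continuous a0)
    (hBper : Function.Periodic B S) (hσper : Function.Periodic σ S)
    (ha0per : Function.Periodic a0 S)
    (hBpos : ∀ s, 0 < B s) (hσpos : ∀ s, 0 < σ s) (ha0nonneg : ∀ s, 0 ≤ a0 s)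
    (hint : 0 < ∫ s in (0:ℝ)..S, a0 s / B s) :
    ∃ ξ : ℝ → ℝ, ContDiff ℝ 1 ξ ∧ Function.Periodic ξ S ∧ (∀ s, 0 < ξ s) ∧
      ∀ s, B s * deriv ξ s + a0 s * ξ s - σ s * ξ s ^ 3 = 0 := by
  have hBne : ∀ s, B s ≠ 0 := fun s => (hBpos s).ne'
  -- f = a0 / B
  set f : ℝ → ℝ := fun t => a0 t / B t with hfdef
  have hfcont : Continuous f := ha0cont.div hBcont hBne
  have hfper : Function.Periodic f S := fun t => by simp only [hfdef, ha0per t, hBper t]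
  have hfint : ∀ a b : ℝ, IntervalIntegrable f MeasureTheory.volume a b :=
    fun a b => hfcont.intervalIntegrable a b
  -- α = ∫₀^s f
  set α : ℝ → ℝ := fun s => ∫ t in (0:ℝ)..s, f t with hαdef
  have hαderiv : ∀ s, HasDerivAt α (f s) s := fun s =>
    intervalIntegral.integral_hasDerivAt_right (hfint 0 s)
      (hfcont.stronglyMeasurableAtFilter _ _) hfcont.continuousAt
  have hαdiff : Differentiable ℝ α := fun s => (hαderiv s).differentiableAt
  have hαcont : Continuous α := hαdiff.continuous
  set A : ℝ := α S with hAdef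
  have hApos : 0 < A := hint
  have hαshift : ∀ s, α (s + S) = α s + A := by
    intro s
    have h1 : α s + ∫ t in s..(s + S), f t = α (s + S) :=
      intervalIntegral.integral_add_adjacent_intervals (hfint 0 s) (hfint s (s + S))
    have h2 : (∫ t in s..(s + S), f t) = ∫ t in (0:ℝ)..(0 + S), f t :=
      hfper.intervalIntegral_add_eq s 0
    rw [zero_add] at h2
    rw [← h1, h2]
  -- g and G
  set g : ℝ → ℝ := fun t => 2 * σ t / B t * Real.exp (-2 * α t) with hgdef
  have hgcont : Continuous g :=
    (((continuous_const.mul hσcont).div hBcont hBne)).mul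
      ((continuous_const.mul hαcont).rexp)
  have hgpos : ∀ t, 0 < g t := fun t =>
    mul_pos (div_pos (by linarith [hσpos t]) (hBpos t)) (Real.exp_pos _)
  have hgint : ∀ a b : ℝ, IntervalIntegrable g MeasureTheory.volume a b :=
    fun a b => hgcont.intervalIntegrable a b
  have hgshift : ∀ t, g (t + S) = Real.exp (-2 * A) * g t := by
    intro t
    simp only [hgdef, hσper t, hBper t, hαshift t]
    rw [show -2 * (α t + A) = -2 * α t + -2 * A by ring, Real.exp_add]
    ring
  set G : ℝ → ℝ := fun s => ∫ t in (0:ℝ)..s, g t with hGdef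
  have hGderiv : ∀ s, HasDerivAt G (g s) s := fun s =>
    intervalIntegral.integral_hasDerivAt_right (hgint 0 s)
      (hgcont.stronglyMeasurableAtFilter _ _) hgcont.continuousAt
  set I : ℝ := G S with hIdef
  have hIpos : 0 < I := by
    apply intervalIntegral.intervalIntegral_pos_of_pos_on (hgint 0 S)
      (fun t _ => hgpos t) hS
  have hGshift : ∀ s, G (s + S) = I + Real.exp (-2 * A) * G s := by
    intro s
    have h1 : G S + ∫ t in S..(s + S), g t = G (s + S) :=
      intervalIntegral.integral_add_adjacent_intervals (hgint 0 S) (hgint S (s + S))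
    have h2 : (∫ t in (0:ℝ)..s, g (t + S)) = ∫ t in (0 + S)..(s + S), g t :=
      intervalIntegral.integral_comp_add_right g S
    have h3 : (∫ t in (0:ℝ)..s, g (t + S)) = Real.exp (-2 * A) * G s := by
      rw [show (fun t => g (t + S)) = fun t => Real.exp (-2 * A) * g t from
        funext hgshift]
      exact intervalIntegral.integral_const_mul _ _
    have h4 : (∫ t in S..(s + S), g t) = Real.exp (-2 * A) * G s := by
      rw [← h3, h2, zero_add]
    rw [hIdef, ← h1, h4]
  -- constant C
  have hexpA : Real.exp (-2 * A) < 1 := by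
    rw [Real.exp_lt_one_iff]; linarith
  set C : ℝ := I / (1 - Real.exp (-2 * A)) with hCdef
  have hden : 0 < 1 - Real.exp (-2 * A) := by linarith
  have hCI : I < C := by
    rw [hCdef, lt_div_iff₀ hden]
    nlinarith [Real.exp_pos (-2 * A), hIpos]
  have hCbal : Real.exp (2 * A) * (C - I) = C := by
    have hCI' : C * (1 - Real.exp (-2 * A)) = I := by
      rw [hCdef, div_mul_cancel₀ _ hden.ne']
    have h0 : C - I = Real.exp (-2 * A) * C := by linear_combination hCI'
    rw [h0, ← mul_assoc, ← Real.exp_add]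
    norm_num
  -- η
  set η : ℝ → ℝ := fun s => Real.exp (2 * α s) * (C - G s) with hηdef
  have hηderiv : ∀ s, HasDerivAt η (2 * f s * η s - 2 * σ s / B s) s := by
    intro s
    have h1 : HasDerivAt (fun s => Real.exp (2 * α s)) (2 * f s * Real.exp (2 * α s)) s := by
      have := (((hαderiv s).const_mul 2).exp)
      simpa [mul_comm] using this
    have h2 : HasDerivAt (fun s => C - G s) (-(g s)) s := (hGderiv s).const_sub C
    have h : HasDerivAt η (2 * f s * Real.exp (2 * α s) * (C - G s) + Real.exp (2 * α s) * -g s) s :=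
      h1.mul h2
    convert h using 1
    simp only [hηdef, hgdef]
    have hBne' := hBne s
    field_simp
    rw [show 2 * α s = -(-2 * α s) by ring, Real.exp_neg]
    field_simp
    ring
  have hηdiff : Differentiable ℝ η := fun s => (hηderiv s).differentiableAt
  have hηper : Function.Periodic η S := by
    intro s
    simp only [hηdef, hαshift s, hGshift s]
    rw [show 2 * (α s + A) = 2 * α s + 2 * A by ring, Real.exp_add]
    have key : Real.exp (2 * A) * (C - (I + Real.exp (-2 * A) * G s)) = C - G s := by
      have e1 : Real.exp (2 * A) * Real.exp (-2 * A) = 1 := by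
        rw [← Real.exp_add]; norm_num
      have : Real.exp (2 * A) * (C - (I + Real.exp (-2 * A) * G s))
          = Real.exp (2 * A) * (C - I) - (Real.exp (2 * A) * Real.exp (-2 * A)) * G s := by
        ring
      rw [this, e1, hCbal, one_mul]
    rw [mul_assoc, key]
  -- positivity of η
  have hGmono : ∀ s ∈ Set.Ico (0:ℝ) S, G s ≤ I := by
    intro s hs
    have : G s + ∫ t in s..S, g t = G S :=
      intervalIntegral.integral_add_adjacent_intervals (hgint 0 s) (hgint s S)
    have hnn : 0 ≤ ∫ t in s..S, g t :=
      intervalIntegral.integral_nonneg hs.2.le (fun t _ => (hgpos t).le)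
    rw [hIdef]; linarith
  have hηpos : ∀ s, 0 < η s := by
    intro s
    obtain ⟨y, hy, hval⟩ := hηper.exists_mem_Ico₀ hS s
    rw [hval]
    have : G y ≤ I := hGmono y hy
    have : 0 < C - G y := by linarith
    exact mul_pos (Real.exp_pos _) this
  have hηne : ∀ s, η s ≠ 0 := fun s => (hηpos s).ne'
  have hsqrtpos : ∀ s, 0 < Real.sqrt (η s) := fun s => Real.sqrt_pos.2 (hηpos s)
  -- ξ = 1/√η
  refine ⟨fun s => (Real.sqrt (η s))⁻¹, ?_, ?_, ?_, ?_⟩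
  · -- ContDiff
    have hη1 : ContDiff ℝ 1 η := by
      rw [contDiff_one_iff_deriv]
      refine ⟨hηdiff, ?_⟩
      have hd : deriv η = fun s => 2 * f s * η s - 2 * σ s / B s :=
        funext fun s => (hηderiv s).deriv
      rw [hd]
      exact ((continuous_const.mul hfcont).mul hηdiff.continuous).sub
        ((continuous_const.mul hσcont).div hBcont hBne)
    rw [contDiff_iff_contDiffAt]
    intro s
    exact (((Real.contDiffAt_sqrt (hηne s)).comp s (hη1.contDiffAt)).inv (hsqrtpos s).ne')
  · -- periodic
    intro s; exact congrArg (fun x => (Real.sqrt x)⁻¹) (hηper s)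
  · -- positive
    intro s; exact inv_pos.2 (hsqrtpos s)
  · -- ODE
    intro s
    set r := Real.sqrt (η s) with hr
    have hr2 : r ^ 2 = η s := Real.sq_sqrt (hηpos s).le
    have hrpos : 0 < r := hsqrtpos s
    have hder : HasDerivAt (fun s => (Real.sqrt (η s))⁻¹)
        (-((2 * f s * η s - 2 * σ s / B s) / (2 * r)) / r ^ 2) s :=
      (((hηderiv s).sqrt (hηne s)).inv hrpos.ne')
    rw [hder.deriv]
    have hη' : η s = r ^ 2 := hr2.symm
    have hBne' := hBne s
    simp only [hfdef, ← hr]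
    field_simp [hη']
    rw [hη']; ring
end
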